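/- For every a > 0 and z > 0, one has ∫_0^∞ s^{−1/2} exp(−a²/(2s) − z s) ds = √(π/z) · e^{−a√(2z)}. -/

import Mathlib

open MeasureTheory Real Set

lemma glasser (α β : ℝ) (hα : 0 < α) (hβ : 0 < β) :
    ∫ t in Set.Ioi (0:ℝ), Real.exp (-(Real.sqrt α * t - Real.sqrt β / t)^2)
      = Real.sqrt Real.pi / (2 * Real.sqrt α) := by
  set A := Real.sqrt α with hA
  set B := Real.sqrt β with hB
  have hA0 : 0 < A := Real.sqrt_pos.2 hα
  have hB0 : 0 < B := Real.sqrt_pos.2 hβ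
  set φ : ℝ → ℝ := fun t => A * t - B / t with hφ
  -- derivative of φ on Ioi 0
  have hder : ∀ t ∈ Set.Ioi (0:ℝ), HasDerivWithinAt φ (A + B / t^2) (Set.Ioi 0) t := by
    intro t ht
    have ht0 : t ≠ 0 := (mem_Ioi.1 ht).ne'
    have h1 : HasDerivAt φ (A * 1 - B * (-(t^2)⁻¹)) t := by
      have h : HasDerivAt (fun y => A * y - B * y⁻¹) (A * 1 - B * (-(t^2)⁻¹)) t :=
        ((hasDerivAt_id' t).const_mul A).sub ((hasDerivAt_inv ht0).const_mul B)
      have e : φ = fun y => A * y - B * y⁻¹ := by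
        funext y; simp [hφ, div_eq_mul_inv]
      rw [e]; exact h
    have : A * 1 - B * (-(t^2)⁻¹) = A + B / t^2 := by field_simp; ring
    exact (this ▸ h1).hasDerivWithinAt
  -- strict monotonicity, injectivity
  have hmono : StrictMonoOn φ (Set.Ioi 0) := by
    intro s hs t ht hst
    have hs0 : (0:ℝ) < s := hs
    have ht0 : (0:ℝ) < t := ht
    have h1 : B / t < B / s := div_lt_div_of_pos_left hB0 hs0 hst
    have h2 : A * s < A * t := by nlinarith
    simp only [hφ]
    linarith
  have hinj : InjOn φ (Set.Ioi 0) := hmono.injOn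
  -- surjectivity onto ℝ
  have himg : φ '' Set.Ioi 0 = Set.univ := by
    ext y
    simp only [Set.mem_image, Set.mem_univ, iff_true, mem_Ioi]
    have hd2 : Real.sqrt (y^2 + 4*A*B) ^ 2 = y^2 + 4*A*B :=
      Real.sq_sqrt (by positivity)
    set d := Real.sqrt (y^2 + 4*A*B) with hd
    have hd0 : 0 < d := Real.sqrt_pos.2 (by positivity)
    have hdy : -y < d := by nlinarith [sq_nonneg (d + y)]
    have hyd : 0 < y + d := by linarith
    refine ⟨(y + d) / (2*A), div_pos hyd (by positivity), ?_⟩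
    simp only [hφ]
    field_simp
    nlinarith [hd2]
  -- Gaussian base
  have base : ∫ x : ℝ, Real.exp (-x^2) = Real.sqrt Real.pi := by
    simpa using integral_gaussian 1
  -- first change of variables
  have step1 : Real.sqrt Real.pi
      = ∫ t in Set.Ioi (0:ℝ), |A + B / t^2| • Real.exp (-(φ t)^2) := by
    rw [← base, ← MeasureTheory.setIntegral_univ, ← himg,
      MeasureTheory.integral_image_eq_integral_abs_deriv_smul measurableSet_Ioi hder hinj]
  -- integrability of the transported function
  have hsumint : IntegrableOn (fun t => |A + B / t^2| • Real.exp (-(φ t)^2)) (Set.Ioi 0) := by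
    have h := (MeasureTheory.integrableOn_image_iff_integrableOn_abs_deriv_smul
        measurableSet_Ioi hder hinj (fun x => Real.exp (-x^2))).1
    rw [himg, integrableOn_univ] at h
    exact h (by simpa using integrable_exp_neg_mul_sq (one_pos))
  have habs : ∀ t ∈ Set.Ioi (0:ℝ), |A + B / t^2| = A + B / t^2 := by
    intro t ht
    have ht0 : (0:ℝ) < t := ht
    exact abs_of_pos (by positivity)
  -- integrability of exp(-(φ t)^2) on Ioi 0
  have hcont : ContinuousOn (fun t => Real.exp (-(φ t)^2)) (Set.Ioi 0) := by
    apply Real.continuous_exp.comp_continuousOn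
    apply ContinuousOn.neg
    apply ContinuousOn.pow
    exact (continuousOn_const.mul continuousOn_id).sub
      (continuousOn_const.div continuousOn_id (fun x hx => ne_of_gt hx))
  have hint1 : IntegrableOn (fun t => Real.exp (-(φ t)^2)) (Set.Ioi 0) := by
    apply Integrable.mono' (hsumint.smul (A⁻¹))
    · exact hcont.aestronglyMeasurable measurableSet_Ioi
    · filter_upwards [ae_restrict_mem measurableSet_Ioi] with t ht
      have ht0 : (0:ℝ) < t := ht
      simp only [Pi.smul_apply, smul_eq_mul, Real.norm_eq_abs, Real.abs_exp]
      rw [habs t ht]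
      have h1 : (1:ℝ) ≤ A⁻¹ * (A + B / t^2) := by
        have hb : 0 < B / t^2 := by positivity
        rw [inv_mul_eq_div, le_div_iff₀ hA0]
        linarith
      nlinarith [Real.exp_pos (-(φ t)^2), h1]
  have hint2 : IntegrableOn (fun t => (B / t^2) * Real.exp (-(φ t)^2)) (Set.Ioi 0) := by
    have : IntegrableOn (fun t => |A + B / t^2| • Real.exp (-(φ t)^2)
        - A * Real.exp (-(φ t)^2)) (Set.Ioi 0) := hsumint.sub (hint1.const_mul A)
    apply this.congr_fun _ measurableSet_Ioi
    intro t ht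
    simp only [smul_eq_mul]
    rw [habs t ht]
    ring
  -- second change of variables : t ↦ (B/A)/t
  set c := B / A with hc
  have hc0 : 0 < c := div_pos hB0 hA0
  set ρ : ℝ → ℝ := fun t => c / t with hρ
  have hρder : ∀ t ∈ Set.Ioi (0:ℝ), HasDerivWithinAt ρ (-(c / t^2)) (Set.Ioi 0) t := by
    intro t ht
    have ht0 : t ≠ 0 := (mem_Ioi.1 ht).ne'
    have h1 : HasDerivAt ρ (c * (-(t^2)⁻¹)) t := by
      simpa [hρ, div_eq_mul_inv] using (hasDerivAt_inv ht0).const_mul c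
    have : c * (-(t^2)⁻¹) = -(c / t^2) := by field_simp
    exact (this ▸ h1).hasDerivWithinAt
  have hρinj : InjOn ρ (Set.Ioi 0) := by
    intro x hx y hy hxy
    have hx0 : (0:ℝ) < x := hx
    have hy0 : (0:ℝ) < y := hy
    simp only [hρ] at hxy
    field_simp at hxy
    exact hxy.symm
  have hρimg : ρ '' Set.Ioi 0 = Set.Ioi 0 := by
    ext x
    simp only [Set.mem_image, mem_Ioi]
    constructor
    · rintro ⟨t, ht, rfl⟩
      exact div_pos hc0 ht
    · intro hx
      refine ⟨c / x, div_pos hc0 hx, ?_⟩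
      show c / (c / x) = x
      rw [div_div_eq_mul_div, mul_comm]
      exact mul_div_cancel_right₀ x hc0.ne'
  have hφneg : ∀ t : ℝ, 0 < t → φ (c / t) = -(φ t) := by
    intro t ht
    show A * (c / t) - B / (c / t) = -(A * t - B / t)
    rw [hc]
    field_simp
    ring
  have sub2 : ∫ y in Set.Ioi (0:ℝ), A * Real.exp (-(φ y)^2)
      = ∫ t in Set.Ioi (0:ℝ), (B / t^2) * Real.exp (-(φ t)^2) := by
    have h := MeasureTheory.integral_image_eq_integral_abs_deriv_smul
      measurableSet_Ioi hρder hρinj (fun y => A * Real.exp (-(φ y)^2))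
    rw [hρimg] at h
    rw [h]
    apply setIntegral_congr_fun measurableSet_Ioi
    intro t ht
    have ht0 : (0:ℝ) < t := ht
    show |(-(c / t^2))| • (A * Real.exp (-(φ (ρ t))^2)) = B / t^2 * Real.exp (-(φ t)^2)
    have hρt : ρ t = c / t := rfl
    rw [hρt, hφneg t ht0]
    simp only [smul_eq_mul, abs_neg, neg_sq]
    rw [abs_of_pos (by positivity : (0:ℝ) < c / t^2)]
    have hcA : c / t^2 * A = B / t^2 := by
      rw [hc]; field_simp
    nlinarith [Real.exp_pos (-(φ t)^2), hcA]
  -- combine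
  have split : Real.sqrt Real.pi
      = A * (∫ t in Set.Ioi (0:ℝ), Real.exp (-(φ t)^2))
        + ∫ t in Set.Ioi (0:ℝ), (B / t^2) * Real.exp (-(φ t)^2) := by
    rw [step1]
    rw [← MeasureTheory.integral_const_mul]
    rw [← MeasureTheory.integral_add (hint1.const_mul A) hint2]
    apply setIntegral_congr_fun measurableSet_Ioi
    intro t ht
    show |A + B / t^2| • Real.exp (-(φ t)^2)
      = A * Real.exp (-(φ t)^2) + B / t^2 * Real.exp (-(φ t)^2)
    rw [habs t ht]
    simp only [smul_eq_mul]
    ring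
  have sub2' : A * (∫ t in Set.Ioi (0:ℝ), Real.exp (-(φ t)^2))
      = ∫ t in Set.Ioi (0:ℝ), (B / t^2) * Real.exp (-(φ t)^2) := by
    rw [← sub2, ← MeasureTheory.integral_const_mul]
  have final : Real.sqrt Real.pi
      = 2 * A * (∫ t in Set.Ioi (0:ℝ), Real.exp (-(φ t)^2)) := by
    rw [split, ← sub2']; ring
  have : (∫ t in Set.Ioi (0:ℝ), Real.exp (-(φ t)^2))
      = Real.sqrt Real.pi / (2 * A) := by
    field_simp at final ⊢
    linarith
  simpa [hφ] using this

/-- for every `a > 0` and `z > 0`,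
`∫_0^∞ s^{-1/2} exp(-a²/(2s) - z s) ds = √(π/z) · e^{-a√(2z)}`. -/
theorem stmt_8 (a z : ℝ) (ha : 0 < a) (hz : 0 < z) :
    ∫ s in Set.Ioi (0:ℝ), s ^ (-(1:ℝ)/2) * Real.exp (-(a ^ 2 / (2 * s)) - z * s)
      = Real.sqrt (Real.pi / z) * Real.exp (-(a * Real.sqrt (2 * z))) := by
  have hz' : (0:ℝ) < Real.sqrt z := Real.sqrt_pos.2 hz
  have hb : (0:ℝ) < a^2/2 := by positivity
  -- substitution s = t^2
  set σ : ℝ → ℝ := fun t => t^2 with hσ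
  have hσder : ∀ t ∈ Set.Ioi (0:ℝ), HasDerivWithinAt σ (2*t) (Set.Ioi 0) t := by
    intro t ht
    have := hasDerivAt_pow 2 t
    simpa [hσ] using this.hasDerivWithinAt
  have hσinj : InjOn σ (Set.Ioi 0) := by
    intro x hx y hy hxy
    have hx0 : (0:ℝ) < x := hx
    have hy0 : (0:ℝ) < y := hy
    simp only [hσ] at hxy
    nlinarith
  have hσimg : σ '' Set.Ioi 0 = Set.Ioi 0 := by
    ext x
    simp only [Set.mem_image, mem_Ioi]
    constructor
    · rintro ⟨t, ht, rfl⟩; positivity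
    · intro hx
      exact ⟨Real.sqrt x, Real.sqrt_pos.2 hx, Real.sq_sqrt hx.le⟩
  have key := MeasureTheory.integral_image_eq_integral_abs_deriv_smul
    measurableSet_Ioi hσder hσinj
    (fun s => s ^ (-(1:ℝ)/2) * Real.exp (-(a ^ 2 / (2 * s)) - z * s))
  rw [hσimg] at key
  rw [key]
  -- the algebraic identity 2 √z √(a²/2) = a √(2z)
  have h2 : Real.sqrt (z * (a^2/2)) = a * Real.sqrt (2*z) / 2 := by
    rw [show z*(a^2/2) = (a*Real.sqrt (2*z)/2)^2 by
      rw [div_pow, mul_pow, Real.sq_sqrt (by positivity)]; ring]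
    exact Real.sqrt_sq (by positivity)
  have h2' : 2 * (Real.sqrt z * Real.sqrt (a^2/2)) = a * Real.sqrt (2*z) := by
    rw [← Real.sqrt_mul hz.le]
    linarith
  -- rewrite the integrand
  have hcong : EqOn
      (fun t => |2*t| • ((σ t) ^ (-(1:ℝ)/2) * Real.exp (-(a ^ 2 / (2 * σ t)) - z * σ t)))
      (fun t => Real.exp (-(Real.sqrt z * t - Real.sqrt (a^2/2) / t)^2)
        * (2 * Real.exp (-(a * Real.sqrt (2*z))))) (Set.Ioi 0) := by
    intro t ht
    have ht0 : (0:ℝ) < t := ht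
    have habs : |2*t| = 2*t := abs_of_pos (by linarith)
    have hrpow : (σ t) ^ (-(1:ℝ)/2) = t⁻¹ := by
      show ((t^2 : ℝ)) ^ (-(1:ℝ)/2) = t⁻¹
      rw [← Real.rpow_natCast t 2, ← Real.rpow_mul ht0.le]
      norm_num
      rw [Real.rpow_neg_one]
    have hexp : -(a ^ 2 / (2 * σ t)) - z * σ t
        = -(Real.sqrt z * t - Real.sqrt (a^2/2) / t)^2 + (-(a * Real.sqrt (2*z))) := by
      show -(a ^ 2 / (2 * t^2)) - z * t^2 = _
      have e1 : Real.sqrt z ^ 2 = z := Real.sq_sqrt hz.le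
      have e2 : Real.sqrt (a^2/2) ^ 2 = a^2/2 := Real.sq_sqrt hb.le
      have expand : (Real.sqrt z * t - Real.sqrt (a^2/2)/t)^2
          = z*t^2 - 2*(Real.sqrt z * Real.sqrt (a^2/2)) + (Real.sqrt (a^2/2))^2/t^2 := by
        have h0 : (Real.sqrt z * t - Real.sqrt (a^2/2)/t)^2
            = (Real.sqrt z)^2*t^2
              - 2*(Real.sqrt z * Real.sqrt (a^2/2))*(t/t) + (Real.sqrt (a^2/2))^2/t^2 := by
          ring
        rw [h0, div_self ht0.ne', e1, mul_one]
      rw [expand, e2]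
      linear_combination -h2'
    simp only [smul_eq_mul, habs, hrpow, hexp, Real.exp_add]
    field_simp
  rw [MeasureTheory.setIntegral_congr_fun measurableSet_Ioi hcong,
    MeasureTheory.integral_mul_const, glasser z (a^2/2) hz hb]
  rw [Real.sqrt_div Real.pi_nonneg]
  field_simp
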